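/- Let Q_A ∈ 𝒬 be a queueing profile with Q_A ≠ Q̂, let Y be an ordered local pressure-related mapping fixing the equilibrium Q̂, and let Q_B = Y(Q_A). Then d(Q_B, Q̂) ≥ d(Q_A, Q̂), where d is the sup-norm distance on the arrival interval. -/

import Mathlib

/-- A function is piecewise continuously differentiable on [a,b] if [a,b] can be
partitioned into finitely many subintervals, on the interior of each of which the
function is differentiable with continuous derivative. -/
def PiecewiseC1On (f : ℝ → ℝ) (a b : ℝ) : Prop :=
  ∃ (k : ℕ) (p : ℕ → ℝ), 0 < k ∧ p 0 = a ∧ p k = b ∧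
    (∀ i < k, p i < p (i + 1)) ∧
    ∀ i < k, (∀ t ∈ Set.Ioo (p i) (p (i + 1)), DifferentiableAt ℝ f t) ∧
      ContinuousOn (deriv f) (Set.Ioo (p i) (p (i + 1)))

/-- The class 𝒬 of admissible queueing delay profiles on [τₛ, τₑ]. -/
def QSpace (τs τe : ℝ) : Set (ℝ → ℝ) :=
  {Q | ContinuousOn Q (Set.Icc τs τe) ∧ PiecewiseC1On Q τs τe ∧
    Q τs = 0 ∧ Q τe = 0 ∧ (∀ t ∈ Set.Ioo τs τe, 0 < Q t) ∧
    ∀ t₁ ∈ Set.Icc τs τe, ∀ t₂ ∈ Set.Icc τs τe, t₁ < t₂ → Q t₂ - Q t₁ < t₂ - t₁}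

/-- Sup-norm distance between two queueing profiles on [τₛ, τₑ]. -/
noncomputable def supDist (τs τe : ℝ) (Q₁ Q₂ : ℝ → ℝ) : ℝ :=
  sSup ((fun t => |Q₁ t - Q₂ t|) '' Set.Icc τs τe)

/-- Derivative of the cost profile of the traveler n(t) = N₁ + t·s arriving at t,
given queueing profile Q: C'_{n(t)}(t | Q). -/
noncomputable def costDeriv (β γ : ℝ → ℝ) (N₁ s : ℝ) (Q : ℝ → ℝ) (t : ℝ) : ℝ :=
  if t < 0 then deriv Q t - β (N₁ + t * s) else deriv Q t + γ (N₁ + t * s)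

/-- Ordered local pressure-related (OLP) dynamics: the mapping preserves 𝒬, and
wherever Q is differentiable the change in queue has the sign of the local cost
derivative. -/
def IsOLP (τs τe : ℝ) (β γ : ℝ → ℝ) (N₁ s : ℝ) (Y : (ℝ → ℝ) → (ℝ → ℝ)) : Prop :=
  (∀ Q ∈ QSpace τs τe, Y Q ∈ QSpace τs τe) ∧
  ∀ Q ∈ QSpace τs τe, ∀ t ∈ Set.Ioo τs τe, t ≠ 0 → DifferentiableAt ℝ Q t →
    0 ≤ (Y Q t - Q t) * costDeriv β γ N₁ s Q t


section AuxOLP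
open Set


/-- If `u` is continuous on `[a,b]` and has nonpositive derivative on `(a,b)`,
then `u b ≤ u a`. -/
lemma aux_core (a b : ℝ) (hab : a ≤ b) (u : ℝ → ℝ)
    (hc : ContinuousOn u (Icc a b))
    (hd : ∀ t ∈ Ioo a b, ∃ u', HasDerivAt u u' t ∧ u' ≤ 0) :
    u b ≤ u a := by
  have hanti : AntitoneOn u (Icc a b) := by
    apply antitoneOn_of_deriv_nonpos (convex_Icc a b) hc
    · intro t ht
      rw [interior_Icc] at ht
      obtain ⟨u', hu', _⟩ := hd t ht
      exact hu'.differentiableAt.differentiableWithinAt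
    · intro t ht
      rw [interior_Icc] at ht
      obtain ⟨u', hu', hle⟩ := hd t ht
      rw [hu'.deriv]; exact hle
  exact hanti (left_mem_Icc.2 hab) (right_mem_Icc.2 hab) hab

/-- Same, allowing a finite exceptional set. -/
lemma aux_mono_except : ∀ (n : ℕ) (E : Finset ℝ), E.card ≤ n → ∀ a b : ℝ, a ≤ b →
    ∀ u : ℝ → ℝ, ContinuousOn u (Icc a b) →
    (∀ t ∈ Ioo a b, t ∉ E → ∃ u', HasDerivAt u u' t ∧ u' ≤ 0) →
    u b ≤ u a := by
  intro n
  induction n with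
  | zero =>
    intro E hE a b hab u hc hd
    refine aux_core a b hab u hc fun t ht => hd t ht ?_
    have : E = ∅ := Finset.card_eq_zero.1 (Nat.le_zero.1 hE)
    simp [this]
  | succ n ih =>
    intro E hE a b hab u hc hd
    by_cases hex : ∃ c ∈ E, c ∈ Ioo a b
    · obtain ⟨c, hcE, hcI⟩ := hex
      have hcard : (E.erase c).card ≤ n := by
        have := Finset.card_erase_of_mem hcE
        omega
      have h1 : u c ≤ u a := by
        refine ih (E.erase c) hcard a c hcI.1.le u
          (hc.mono (Icc_subset_Icc le_rfl hcI.2.le)) ?_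
        intro t ht htE
        refine hd t ⟨ht.1, ht.2.trans hcI.2⟩ ?_
        intro htE'
        exact htE (Finset.mem_erase.2 ⟨ne_of_lt ht.2, htE'⟩)
      have h2 : u b ≤ u c := by
        refine ih (E.erase c) hcard c b hcI.2.le u
          (hc.mono (Icc_subset_Icc hcI.1.le le_rfl)) ?_
        intro t ht htE
        refine hd t ⟨hcI.1.trans ht.1, ht.2⟩ ?_
        intro htE'
        exact htE (Finset.mem_erase.2 ⟨(ne_of_gt ht.1), htE'⟩)
      exact h2.trans h1
    · refine aux_core a b hab u hc fun t ht => hd t ht fun htE => hex ⟨t, htE, ht⟩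

/-- Crossing lemma: if `u` and `v` agree at the endpoints and, outside a finite
exceptional set, `u` has a derivative whose sign agrees with `v - u`, then
`v` reaches the value `u t*` somewhere. -/
lemma aux_crossing (a b tstar : ℝ) (u v : ℝ → ℝ) (E : Finset ℝ)
    (htst : tstar ∈ Icc a b)
    (hu : ContinuousOn u (Icc a b)) (hv : ContinuousOn v (Icc a b))
    (hea : u a = v a)
    (hder : ∀ t ∈ Ioo a b, t ∉ E →
      ∃ u', HasDerivAt u u' t ∧ 0 ≤ (v t - u t) * u') :
    ∃ t ∈ Icc a b, u tstar ≤ v t := by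
  by_cases hts : u tstar ≤ v tstar
  · exact ⟨tstar, htst, hts⟩
  push_neg at hts
  -- the set where u ≤ v, to the left of tstar
  set S : Set ℝ := Icc a tstar ∩ (fun t => u t - v t) ⁻¹' Iic 0 with hS
  have haS : a ∈ S := by
    constructor
    · exact ⟨le_rfl, htst.1⟩
    · simp [hea]
  have hSsub : S ⊆ Icc a tstar := inter_subset_left
  have hSclosed : IsClosed S := by
    apply ContinuousOn.preimage_isClosed_of_isClosed
      ((hu.sub hv).mono (Icc_subset_Icc le_rfl htst.2)) isClosed_Icc isClosed_Iic
  have hScomp : IsCompact S := isCompact_Icc.of_isClosed_subset hSclosed hSsub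
  have hSne : S.Nonempty := ⟨a, haS⟩
  set c := sSup S with hc
  have hcS : c ∈ S := hScomp.sSup_mem hSne
  have hcIcc : c ∈ Icc a tstar := hSsub hcS
  have hcv : u c ≤ v c := by
    have := hcS.2
    simpa [sub_nonpos] using this
  have hclt : c < tstar := by
    rcases lt_or_eq_of_le hcIcc.2 with h | h
    · exact h
    · rw [h] at hcv; exact absurd hcv (not_le.2 hts)
  -- on (c, tstar], v < u
  have hvu : ∀ t ∈ Ioc c tstar, v t < u t := by
    intro t ht
    by_contra hle
    push_neg at hle
    have htS : t ∈ S := ⟨⟨hcIcc.1.trans ht.1.le, ht.2⟩, by simp [sub_nonpos, hle]⟩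
    exact absurd (le_csSup hScomp.bddAbove htS) (not_le.2 ht.1)
  -- u is nonincreasing on [c, tstar]
  have hmono : u tstar ≤ u c := by
    refine aux_mono_except E.card E le_rfl c tstar hclt.le u
      (hu.mono (Icc_subset_Icc hcIcc.1 htst.2)) ?_
    intro t ht htE
    have htab : t ∈ Ioo a b := ⟨lt_of_le_of_lt hcIcc.1 ht.1, lt_of_lt_of_le ht.2 htst.2⟩
    obtain ⟨u', hu', hsign⟩ := hder t htab htE
    refine ⟨u', hu', ?_⟩
    have hneg : v t - u t < 0 := sub_neg.2 (hvu t ⟨ht.1, ht.2.le⟩)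
    by_contra hpos
    push_neg at hpos
    nlinarith
  exact ⟨c, ⟨hcIcc.1, hcIcc.2.trans htst.2⟩, hmono.trans hcv⟩



lemma aux_find_piece (k : ℕ) (p : ℕ → ℝ) (hmono : ∀ i < k, p i < p (i+1)) (t : ℝ)
    (h0 : p 0 < t) (hk : t < p k) (hne : ∀ i ≤ k, p i ≠ t) :
    ∃ i < k, t ∈ Ioo (p i) (p (i+1)) := by
  classical
  set P : ℕ → Prop := fun j => p j < t with hP
  set i := Nat.findGreatest P k with hi
  have hPi : P i := Nat.findGreatest_spec (Nat.zero_le k) h0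
  have hik : i ≤ k := Nat.findGreatest_le k
  have hiklt : i < k := by
    rcases lt_or_eq_of_le hik with h | h
    · exact h
    · exfalso; rw [h] at hPi; exact absurd hk (not_lt.2 hPi.le)
  have hnot : ¬ P (i+1) := Nat.findGreatest_is_greatest (Nat.lt_succ_self i) hiklt
  have h2 : t < p (i+1) := lt_of_le_of_ne (not_lt.1 hnot) (hne (i+1) hiklt).symm
  exact ⟨i, hiklt, hPi, h2⟩

end AuxOLP

/-- For any OLP mapping Y fixing the equilibrium Q̂ and any
non-equilibrium profile Q_A ∈ 𝒬, the distance from equilibrium does not decrease: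
d(Y(Q_A), Q̂) ≥ d(Q_A, Q̂). -/
theorem olp_distance_nondecreasing
    (N N₁ s τs τe : ℝ) (hs : 0 < s) (hN : 0 < N)
    (hτs : τs < 0) (hτe : 0 < τe) (hN₁ : N₁ = -s * τs) (hτeN : τe = τs + N / s)
    (β γ : ℝ → ℝ)
    (hβc : ContinuousOn β (Set.Icc 0 N))
    (hβmono : StrictMonoOn β (Set.Icc 0 N))
    (hβmem : ∀ n ∈ Set.Icc (0:ℝ) N, β n ∈ Set.Ioo (0:ℝ) 1)
    (hγc : ContinuousOn γ (Set.Icc 0 N))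
    (hγanti : StrictAntiOn γ (Set.Icc 0 N))
    (hγpos : ∀ n ∈ Set.Icc (0:ℝ) N, 0 < γ n)
    (Qhat : ℝ → ℝ) (hQhat : Qhat ∈ QSpace τs τe)
    (hQhat1 : ∀ t ∈ Set.Ioo τs 0, HasDerivAt Qhat (β (N₁ + t * s)) t)
    (hQhat2 : ∀ t ∈ Set.Ioo 0 τe, HasDerivAt Qhat (-γ (N₁ + t * s)) t)
    (Y : (ℝ → ℝ) → (ℝ → ℝ)) (hY : IsOLP τs τe β γ N₁ s Y) (hfix : Y Qhat = Qhat)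
    (QA : ℝ → ℝ) (hQA : QA ∈ QSpace τs τe)
    (hne : ∃ t ∈ Set.Icc τs τe, QA t ≠ Qhat t) :
    supDist τs τe QA Qhat ≤ supDist τs τe (Y QA) Qhat := by
  classical
  obtain ⟨hYmem, hOLP⟩ := hY
  have hYQA := hYmem QA hQA
  have hQA' := hQA
  obtain ⟨hQAc, ⟨k, p, hk0, hp0, hpk, hpmono, hpdiff⟩, hQAs, hQAe, -, -⟩ := hQA'
  obtain ⟨hQhatc, -, hQhats, hQhate, -, -⟩ := hQhat
  obtain ⟨hYQAc, -, hYQAs, hYQAe, -, -⟩ := hYQA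
  have hts_le : τs ≤ τe := by linarith
  have hKne : (Set.Icc τs τe).Nonempty := Set.nonempty_Icc.2 hts_le
  have hfc : ContinuousOn (fun t => |QA t - Qhat t|) (Set.Icc τs τe) :=
    (hQAc.sub hQhatc).abs
  have hgc : ContinuousOn (fun t => |Y QA t - Qhat t|) (Set.Icc τs τe) :=
    (hYQAc.sub hQhatc).abs
  obtain ⟨tstar, htstar, hmax'⟩ := isCompact_Icc.exists_isMaxOn hKne hfc
  have hmax : ∀ t ∈ Set.Icc τs τe, |QA t - Qhat t| ≤ |QA tstar - Qhat tstar| :=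
    fun t ht => hmax' ht
  have hsupA : supDist τs τe QA Qhat = |QA tstar - Qhat tstar| := by
    apply IsGreatest.csSup_eq
    exact ⟨⟨tstar, htstar, rfl⟩, by rintro y ⟨t, ht, rfl⟩; exact hmax t ht⟩
  have hbddB : BddAbove ((fun t => |Y QA t - Qhat t|) '' Set.Icc τs τe) :=
    (isCompact_Icc.image_of_continuousOn hgc).bddAbove
  have hsupB : ∀ t ∈ Set.Icc τs τe, |Y QA t - Qhat t| ≤ supDist τs τe (Y QA) Qhat := by
    intro t ht
    exact le_csSup hbddB ⟨t, ht, rfl⟩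
  -- exceptional set
  set E : Finset ℝ := ((Finset.range (k+1)).image p) ∪ {0} with hE
  -- key derivative / sign fact
  have hkey : ∀ t ∈ Set.Ioo τs τe, t ∉ E →
      HasDerivAt (fun t => QA t - Qhat t) (costDeriv β γ N₁ s QA t) t ∧
      0 ≤ (Y QA t - QA t) * costDeriv β γ N₁ s QA t := by
    intro t ht htE
    have ht0 : t ≠ 0 := by
      intro h
      exact htE (Finset.mem_union_right _ (by simp [h]))
    have htp : ∀ i ≤ k, p i ≠ t := by
      intro i hi hip
      exact htE (Finset.mem_union_left _
        (Finset.mem_image.2 ⟨i, Finset.mem_range.2 (by omega), hip⟩))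
    obtain ⟨i, hik, hti⟩ := aux_find_piece k p hpmono t
      (by rw [hp0]; exact ht.1) (by rw [hpk]; exact ht.2) htp
    have hdiff : DifferentiableAt ℝ QA t := (hpdiff i hik).1 t hti
    have hOLPt := hOLP QA hQA t ht ht0 hdiff
    refine ⟨?_, hOLPt⟩
    have hQAd : HasDerivAt QA (deriv QA t) t := hdiff.hasDerivAt
    rcases lt_or_gt_of_ne ht0 with htneg | htpos
    · have hQh : HasDerivAt Qhat (β (N₁ + t * s)) t := hQhat1 t ⟨ht.1, htneg⟩
      have hcd : costDeriv β γ N₁ s QA t = deriv QA t - β (N₁ + t * s) := by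
        simp [costDeriv, htneg]
      rw [hcd]
      exact hQAd.sub hQh
    · have hQh : HasDerivAt Qhat (-γ (N₁ + t * s)) t := hQhat2 t ⟨htpos, ht.2⟩
      have hcd : costDeriv β γ N₁ s QA t = deriv QA t - -γ (N₁ + t * s) := by
        simp [costDeriv, not_lt.2 htpos.le, sub_neg_eq_add]
      rw [hcd]
      exact hQAd.sub hQh
  rw [hsupA]
  rcases le_or_gt (Qhat tstar) (QA tstar) with hsgn | hsgn
  · -- QA tstar ≥ Qhat tstar
    have hDval : |QA tstar - Qhat tstar| = QA tstar - Qhat tstar :=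
      abs_of_nonneg (sub_nonneg.2 hsgn)
    obtain ⟨t, htI, hge⟩ := aux_crossing τs τe tstar
      (fun t => QA t - Qhat t) (fun t => Y QA t - Qhat t) E htstar
      (hQAc.sub hQhatc) (hYQAc.sub hQhatc)
      (by simp [hQAs, hQhats, hYQAs])
      (by
        intro t ht htE
        obtain ⟨hd, hsign⟩ := hkey t ht htE
        refine ⟨costDeriv β γ N₁ s QA t, hd, ?_⟩
        have heq : (Y QA t - Qhat t) - (QA t - Qhat t) = Y QA t - QA t := by ring
        rw [heq]
        exact hsign)
    have h1 : |QA tstar - Qhat tstar| ≤ |Y QA t - Qhat t| := by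
      rw [hDval]
      exact le_trans hge (le_abs_self _)
    exact h1.trans (hsupB t htI)
  · -- QA tstar < Qhat tstar
    have hDval : |QA tstar - Qhat tstar| = Qhat tstar - QA tstar := by
      rw [abs_sub_comm]
      exact abs_of_nonneg (sub_nonneg.2 hsgn.le)
    obtain ⟨t, htI, hge⟩ := aux_crossing τs τe tstar
      (fun t => Qhat t - QA t) (fun t => Qhat t - Y QA t) E htstar
      (hQhatc.sub hQAc) (hQhatc.sub hYQAc)
      (by simp [hQAs, hQhats, hYQAs])
      (by
        intro t ht htE
        obtain ⟨hd, hsign⟩ := hkey t ht htE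
        refine ⟨-(costDeriv β γ N₁ s QA t), ?_, ?_⟩
        · have := hd.neg
          simp only [Pi.neg_def, neg_sub] at this
          exact this
        · have heq : ((Qhat t - Y QA t) - (Qhat t - QA t)) * -(costDeriv β γ N₁ s QA t)
              = (Y QA t - QA t) * costDeriv β γ N₁ s QA t := by ring
          rw [heq]
          exact hsign)
    have h1 : |QA tstar - Qhat tstar| ≤ |Y QA t - Qhat t| := by
      rw [hDval, abs_sub_comm]
      exact le_trans hge (le_abs_self _)
    exact h1.trans (hsupB t htI)
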